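/- Let X be a finite-dimensional real inner product space and let X_a, X_b be linear subspaces with X_a ∩ X_b = {0} such that the orthogonal complements X^a and X^b satisfy X^a + X^b = X. Then there exists a constant C' > 0 such that for all w ∈ X, ⟨w^a⟩ · ⟨w^b⟩ ≥ C' · ⟨w⟩, where w^a, w^b denote the orthogonal projections of w onto X^a, X^b respectively and ⟨v⟩ = (1 + |v|²)^{1/2}. -/

import Mathlib

/-- If `Xa ⊓ Xb = ⊥` and `Xaᗮ + Xbᗮ = X`, then there is `C' > 0` with
`⟨w^a⟩⟨w^b⟩ ≥ C'⟨w⟩` for all `w`, where `w^a, w^b` are the orthogonal projections onto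
`Xaᗮ, Xbᗮ` and `⟨v⟩ = √(1+‖v‖²)`. -/
theorem stmt0 (X : Type*) [NormedAddCommGroup X] [InnerProductSpace ℝ X]
    [FiniteDimensional ℝ X]
    (Xa Xb : Submodule ℝ X) (hab : Xa ⊓ Xb = ⊥) (hsum : Xaᗮ ⊔ Xbᗮ = ⊤) :
    ∃ C : ℝ, 0 < C ∧ ∀ w : X,
      Real.sqrt (1 + ‖(Submodule.orthogonalProjectionOnto Xaᗮ w : X)‖ ^ 2) *
        Real.sqrt (1 + ‖(Submodule.orthogonalProjectionOnto Xbᗮ w : X)‖ ^ 2) ≥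
      C * Real.sqrt (1 + ‖w‖ ^ 2) := by
  classical
  set f : X →ₗ[ℝ] X × X :=
    (Xaᗮ.subtype.comp (Submodule.orthogonalProjectionOnto Xaᗮ).toLinearMap).prod
      (Xbᗮ.subtype.comp (Submodule.orthogonalProjectionOnto Xbᗮ).toLinearMap) with hf
  have hker : LinearMap.ker f = ⊥ := by
    rw [LinearMap.ker_eq_bot']
    intro w hw
    have h1 : (Submodule.orthogonalProjectionOnto Xaᗮ w : X) = 0 := congrArg Prod.fst hw
    have h2 : (Submodule.orthogonalProjectionOnto Xbᗮ w : X) = 0 := congrArg Prod.snd hw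
    have hwa : w ∈ Xa := by
      have : Submodule.orthogonalProjectionOnto Xaᗮ w = 0 := by exact_mod_cast h1
      have := Submodule.orthogonalProjectionOnto_eq_zero_iff.mp this
      rwa [Submodule.orthogonal_orthogonal] at this
    have hwb : w ∈ Xb := by
      have : Submodule.orthogonalProjectionOnto Xbᗮ w = 0 := by exact_mod_cast h2
      have := Submodule.orthogonalProjectionOnto_eq_zero_iff.mp this
      rwa [Submodule.orthogonal_orthogonal] at this
    have : w ∈ Xa ⊓ Xb := ⟨hwa, hwb⟩
    rwa [hab, Submodule.mem_bot] at this
  obtain ⟨K, hK, hanti⟩ := f.exists_antilipschitzWith hker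
  set c : ℝ := min 1 (1 / (K : ℝ) ^ 2) with hc
  have hKpos : (0 : ℝ) < K := hK
  have hcpos : 0 < c := lt_min one_pos (by positivity)
  refine ⟨Real.sqrt c, Real.sqrt_pos.mpr hcpos, fun w => ?_⟩
  set a := ‖(Submodule.orthogonalProjectionOnto Xaᗮ w : X)‖ with ha
  set b := ‖(Submodule.orthogonalProjectionOnto Xbᗮ w : X)‖ with hb
  have hbound : ‖w‖ ≤ K * max a b := by
    have := hanti.le_mul_dist w 0
    simpa [f, dist_eq_norm, Prod.norm_def, ha, hb] using this
  have ha0 : 0 ≤ a := norm_nonneg _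
  have hb0 : 0 ≤ b := norm_nonneg _
  have hmax : ‖w‖ ^ 2 ≤ (K : ℝ) ^ 2 * max a b ^ 2 := by
    have h0 : (0:ℝ) ≤ max a b := le_max_of_le_left ha0
    calc ‖w‖ ^ 2 ≤ (K * max a b) ^ 2 := by
          apply sq_le_sq' _ hbound
          linarith [norm_nonneg w, mul_nonneg (le_of_lt hKpos) h0]
      _ = (K : ℝ) ^ 2 * max a b ^ 2 := by ring
  have key : c * (1 + ‖w‖ ^ 2) ≤ (1 + a ^ 2) * (1 + b ^ 2) := by
    have h1 : c ≤ 1 := min_le_left _ _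
    have h2 : c ≤ 1 / (K : ℝ) ^ 2 := min_le_right _ _
    have h3 : c * ‖w‖ ^ 2 ≤ max a b ^ 2 := by
      have := mul_le_mul_of_nonneg_left hmax (le_of_lt hcpos)
      calc c * ‖w‖ ^ 2 ≤ c * ((K:ℝ)^2 * max a b ^ 2) := this
        _ ≤ (1 / (K:ℝ)^2) * ((K:ℝ)^2 * max a b ^ 2) := by
            apply mul_le_mul_of_nonneg_right h2; positivity
        _ = max a b ^ 2 := by field_simp
    have h4 : max a b ^ 2 ≤ a ^ 2 + b ^ 2 := by
      rcases max_cases a b with ⟨h, _⟩ | ⟨h, _⟩ <;> rw [h] <;> nlinarith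
    have hexp : (1 + a ^ 2) * (1 + b ^ 2) = 1 + (a ^ 2 + b ^ 2) + (a * b) ^ 2 := by ring
    have heq : c * (1 + ‖w‖ ^ 2) = c + c * ‖w‖ ^ 2 := by ring
    linarith [sq_nonneg (a * b)]
  have h1a : (0:ℝ) ≤ 1 + a ^ 2 := by positivity
  have h1b : (0:ℝ) ≤ 1 + b ^ 2 := by positivity
  calc Real.sqrt c * Real.sqrt (1 + ‖w‖ ^ 2)
      = Real.sqrt (c * (1 + ‖w‖ ^ 2)) := (Real.sqrt_mul (le_of_lt hcpos) _).symm
    _ ≤ Real.sqrt ((1 + a ^ 2) * (1 + b ^ 2)) := Real.sqrt_le_sqrt key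
    _ = Real.sqrt (1 + a ^ 2) * Real.sqrt (1 + b ^ 2) := Real.sqrt_mul h1a _
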